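/- In a finite probability space with variables (X, M, W, A, Y), A binary, Y ≥ 0, assume: W ⟂ A | (X, M); there exists nonnegative h with E[Y | A=1, X, M] = E[h(W, X) | X, M] a.s.; and positivity p(m | a, x) > 0, p(a | x) > 0 for all m, a, x. Then the mediation functional θ := ∑_{x,m} E[Y | A=1, X=x, M=m] · p(m | A=0, x) · p(x) satisfies E[min_w (p(w | A=0, X)/p(w | A=1, X)) · E[Y | A=1, X]] ≤ θ ≤ E[max_w (p(w | A=0, X)/p(w | A=1, X)) · E[Y | A=1, X]]. -/

import Mathlib

open Finset Real
open scoped Classical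

/-- Probability of an event under a pmf `P` on a finite sample space. -/
noncomputable def pr {Ω : Type*} [Fintype Ω] (P : Ω → ℝ) (E : Ω → Prop) : ℝ :=
  ∑ ω, if E ω then P ω else 0

/-- Expectation of `f` under `P`. -/
noncomputable def ex {Ω : Type*} [Fintype Ω] (P : Ω → ℝ) (f : Ω → ℝ) : ℝ :=
  ∑ ω, P ω * f ω

/-- Conditional expectation `E[f | E]`. -/
noncomputable def ce {Ω : Type*} [Fintype Ω] (P : Ω → ℝ) (f : Ω → ℝ) (E : Ω → Prop) : ℝ :=
  (∑ ω, if E ω then P ω * f ω else 0) / pr P E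

/-- Conditional probability `P(E | F)`. -/
noncomputable def cpr {Ω : Type*} [Fintype Ω] (P : Ω → ℝ) (E F : Ω → Prop) : ℝ :=
  pr P (fun ω => E ω ∧ F ω) / pr P F

section helpers
variable {Ω : Type*} [Fintype Ω]

lemma pr_nonneg (P : Ω → ℝ) (hP : ∀ ω, 0 ≤ P ω) (E : Ω → Prop) : 0 ≤ pr P E := by
  unfold pr
  apply Finset.sum_nonneg
  intro ω _
  by_cases h : E ω <;> simp [h, hP ω]

lemma pr_mono (P : Ω → ℝ) (hP : ∀ ω, 0 ≤ P ω) {E F : Ω → Prop}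
    (hEF : ∀ ω, E ω → F ω) : pr P E ≤ pr P F := by
  unfold pr
  apply Finset.sum_le_sum
  intro ω _
  by_cases h : E ω
  · simp [h, hEF ω h]
  · by_cases h' : F ω <;> simp [h, h', hP ω]

lemma pr_congr (P : Ω → ℝ) {E F : Ω → Prop} (hEF : ∀ ω, E ω ↔ F ω) :
    pr P E = pr P F := by
  unfold pr; exact Finset.sum_congr rfl fun ω _ => by simp [hEF ω]

lemma pr_split {V : Type*} [Fintype V] (P : Ω → ℝ) (E : Ω → Prop) (g : Ω → V) :
    pr P E = ∑ v, pr P (fun ω => E ω ∧ g ω = v) := by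
  unfold pr
  rw [Finset.sum_comm]
  apply Finset.sum_congr rfl
  intro ω _
  by_cases h : E ω <;> simp [h]

lemma pr_mul_const (P f : Ω → ℝ) (E : Ω → Prop) (c : ℝ) (hc : ∀ ω, E ω → f ω = c) :
    pr (fun ω => P ω * f ω) E = c * pr P E := by
  unfold pr
  rw [Finset.mul_sum]
  apply Finset.sum_congr rfl
  intro ω _
  by_cases h : E ω
  · simp [h, hc ω h]; ring
  · simp [h]

lemma ce_eq (P f : Ω → ℝ) (E : Ω → Prop) :
    ce P f E = pr (fun ω => P ω * f ω) E / pr P E := rfl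

end helpers

/-- Theorem 4: bounds on the mediation functional
`θ = ∑_{x,m} E[Y | A=1, x, m]·p(m | A=0, x)·p(x)` (equal to `E[Y^(1,M^(0))]`). -/
theorem mediation_bounds {Ω X M W : Type*} [Fintype Ω] [Fintype X] [Fintype M]
    [Fintype W] [Nonempty W]
    (P : Ω → ℝ) (hP : ∀ ω, 0 ≤ P ω) (hP1 : ∑ ω, P ω = 1)
    (Xv : Ω → X) (Mv : Ω → M) (Wv : Ω → W) (Av : Ω → Bool) (Yv : Ω → ℝ)
    (hY : ∀ ω, 0 ≤ Yv ω)
    -- W ⟂ A | (X, M)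
    (hWA : ∀ (w : W) (a' : Bool) (x : X) (m : M),
      pr P (fun ω => Wv ω = w ∧ Av ω = a' ∧ Xv ω = x ∧ Mv ω = m) *
          pr P (fun ω => Xv ω = x ∧ Mv ω = m) =
        pr P (fun ω => Wv ω = w ∧ Xv ω = x ∧ Mv ω = m) *
          pr P (fun ω => Av ω = a' ∧ Xv ω = x ∧ Mv ω = m))
    -- mediation bridge function h
    (h : W → X → ℝ) (hh : ∀ w x, 0 ≤ h w x)
    (hbridge : ∀ (x : X) (m : M),
      ce P Yv (fun ω => Av ω = true ∧ Xv ω = x ∧ Mv ω = m) =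
        ce P (fun ω => h (Wv ω) (Xv ω)) (fun ω => Xv ω = x ∧ Mv ω = m))
    -- positivity
    (hpos : ∀ (a' : Bool) (x : X) (m : M),
      0 < pr P fun ω => Av ω = a' ∧ Xv ω = x ∧ Mv ω = m)
    (hposW : ∀ (w : W) (a' : Bool) (x : X),
      0 < pr P fun ω => Wv ω = w ∧ Av ω = a' ∧ Xv ω = x) :
    (∑ x : X,
        (univ.inf' univ_nonempty fun w : W =>
            cpr P (fun ω => Wv ω = w) (fun ω => Av ω = false ∧ Xv ω = x) /
              cpr P (fun ω => Wv ω = w) (fun ω => Av ω = true ∧ Xv ω = x)) *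
          ce P Yv (fun ω => Av ω = true ∧ Xv ω = x) * pr P (fun ω => Xv ω = x)) ≤
      (∑ x : X, ∑ m : M,
        ce P Yv (fun ω => Av ω = true ∧ Xv ω = x ∧ Mv ω = m) *
          cpr P (fun ω => Mv ω = m) (fun ω => Av ω = false ∧ Xv ω = x) *
          pr P (fun ω => Xv ω = x)) ∧
    (∑ x : X, ∑ m : M,
        ce P Yv (fun ω => Av ω = true ∧ Xv ω = x ∧ Mv ω = m) *
          cpr P (fun ω => Mv ω = m) (fun ω => Av ω = false ∧ Xv ω = x) *
          pr P (fun ω => Xv ω = x)) ≤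
      ∑ x : X,
        (univ.sup' univ_nonempty fun w : W =>
            cpr P (fun ω => Wv ω = w) (fun ω => Av ω = false ∧ Xv ω = x) /
              cpr P (fun ω => Wv ω = w) (fun ω => Av ω = true ∧ Xv ω = x)) *
          ce P Yv (fun ω => Av ω = true ∧ Xv ω = x) * pr P (fun ω => Xv ω = x) := by
  -- positivity facts
  have hPxm : ∀ (x : X) (m : M), 0 < pr P (fun ω => Xv ω = x ∧ Mv ω = m) := by
    intro x m
    refine lt_of_lt_of_le (hpos true x m) (pr_mono P hP ?_)
    rintro ω ⟨_, hx, hm⟩; exact ⟨hx, hm⟩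
  have hPA : ∀ (a : Bool) (x : X), 0 < pr P (fun ω => Av ω = a ∧ Xv ω = x) := by
    intro a x
    obtain ⟨w⟩ := (inferInstance : Nonempty W)
    refine lt_of_lt_of_le (hposW w a x) (pr_mono P hP ?_)
    rintro ω ⟨_, ha, hx⟩; exact ⟨ha, hx⟩
  -- ce[Y | A=1, x, m] expressed via h and conditional (on a) W-probabilities
  have hce : ∀ (a : Bool) (x : X) (m : M),
      ce P Yv (fun ω => Av ω = true ∧ Xv ω = x ∧ Mv ω = m) =
      ∑ w : W, h w x *
        (pr P (fun ω => Wv ω = w ∧ Av ω = a ∧ Xv ω = x ∧ Mv ω = m) /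
         pr P (fun ω => Av ω = a ∧ Xv ω = x ∧ Mv ω = m)) := by
    intro a x m
    rw [hbridge x m, ce_eq,
      pr_split (fun ω => P ω * h (Wv ω) (Xv ω)) (fun ω => Xv ω = x ∧ Mv ω = m) Wv,
      Finset.sum_div]
    apply Finset.sum_congr rfl
    intro w _
    rw [pr_mul_const P (fun ω => h (Wv ω) (Xv ω)) _ (h w x)
      (by rintro ω ⟨⟨hx, _⟩, hw⟩; show h (Wv ω) (Xv ω) = h w x; rw [hw, hx]),
      pr_congr P (show ∀ ω, ((Xv ω = x ∧ Mv ω = m) ∧ Wv ω = w) ↔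
        (Wv ω = w ∧ Xv ω = x ∧ Mv ω = m) from fun ω => by tauto)]
    rw [mul_div_assoc]
    congr 1
    rw [div_eq_div_iff (hPxm x m).ne' (hpos a x m).ne']
    linarith [hWA w a x m]
  -- key identity
  have key : ∀ (a : Bool) (x : X),
      (∑ m : M, ce P Yv (fun ω => Av ω = true ∧ Xv ω = x ∧ Mv ω = m) *
        cpr P (fun ω => Mv ω = m) (fun ω => Av ω = a ∧ Xv ω = x)) =
      ∑ w : W, h w x * cpr P (fun ω => Wv ω = w) (fun ω => Av ω = a ∧ Xv ω = x) := by
    intro a x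
    have hc : ∀ m : M, cpr P (fun ω => Mv ω = m) (fun ω => Av ω = a ∧ Xv ω = x)
        = pr P (fun ω => Av ω = a ∧ Xv ω = x ∧ Mv ω = m) /
          pr P (fun ω => Av ω = a ∧ Xv ω = x) := by
      intro m
      unfold cpr
      rw [pr_congr P (show ∀ ω, (Mv ω = m ∧ Av ω = a ∧ Xv ω = x) ↔
        (Av ω = a ∧ Xv ω = x ∧ Mv ω = m) from fun ω => by tauto)]
    have step : ∀ m : M, ce P Yv (fun ω => Av ω = true ∧ Xv ω = x ∧ Mv ω = m) *
        cpr P (fun ω => Mv ω = m) (fun ω => Av ω = a ∧ Xv ω = x)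
        = ∑ w : W, h w x *
            (pr P (fun ω => Wv ω = w ∧ Av ω = a ∧ Xv ω = x ∧ Mv ω = m) /
             pr P (fun ω => Av ω = a ∧ Xv ω = x)) := by
      intro m
      rw [hce a x m, hc m, Finset.sum_mul]
      apply Finset.sum_congr rfl
      intro w _
      have h1 := (hpos a x m).ne'
      field_simp
    rw [Finset.sum_congr rfl (fun m _ => step m), Finset.sum_comm]
    apply Finset.sum_congr rfl
    intro w _
    simp only [← mul_div_assoc]
    rw [← Finset.sum_div, ← Finset.mul_sum, mul_div_assoc]
    congr 1
    unfold cpr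
    congr 1
    rw [pr_split P (fun ω => Wv ω = w ∧ (Av ω = a ∧ Xv ω = x)) Mv]
    exact Finset.sum_congr rfl fun m _ => pr_congr P (fun ω => by tauto)
  -- tower property
  have tower : ∀ x : X, ce P Yv (fun ω => Av ω = true ∧ Xv ω = x)
      = ∑ m : M, ce P Yv (fun ω => Av ω = true ∧ Xv ω = x ∧ Mv ω = m) *
          cpr P (fun ω => Mv ω = m) (fun ω => Av ω = true ∧ Xv ω = x) := by
    intro x
    have step : ∀ m : M, ce P Yv (fun ω => Av ω = true ∧ Xv ω = x ∧ Mv ω = m) *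
        cpr P (fun ω => Mv ω = m) (fun ω => Av ω = true ∧ Xv ω = x)
        = pr (fun ω => P ω * Yv ω) (fun ω => Av ω = true ∧ Xv ω = x ∧ Mv ω = m) /
          pr P (fun ω => Av ω = true ∧ Xv ω = x) := by
      intro m
      rw [ce_eq]
      unfold cpr
      rw [pr_congr P (show ∀ ω, (Mv ω = m ∧ Av ω = true ∧ Xv ω = x) ↔
        (Av ω = true ∧ Xv ω = x ∧ Mv ω = m) from fun ω => by tauto)]
      have h1 := (hpos true x m).ne'
      field_simp
    rw [Finset.sum_congr rfl (fun m _ => step m), ← Finset.sum_div, ce_eq]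
    congr 1
    rw [pr_split (fun ω => P ω * Yv ω) (fun ω => Av ω = true ∧ Xv ω = x) Mv]
    exact Finset.sum_congr rfl fun m _ =>
      pr_congr (fun ω => P ω * Yv ω) (fun ω => by tauto)
  -- per-x facts
  have hq1pos : ∀ (x : X) (w : W),
      0 < cpr P (fun ω => Wv ω = w) (fun ω => Av ω = true ∧ Xv ω = x) := by
    intro x w
    unfold cpr
    exact div_pos (hposW w true x) (hPA true x)
  have hq0nonneg : ∀ (x : X) (w : W),
      0 ≤ cpr P (fun ω => Wv ω = w) (fun ω => Av ω = false ∧ Xv ω = x) := by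
    intro x w
    unfold cpr
    exact div_nonneg (pr_nonneg P hP _) (pr_nonneg P hP _)
  have hcetrue : ∀ x : X, ce P Yv (fun ω => Av ω = true ∧ Xv ω = x)
      = ∑ w : W, h w x * cpr P (fun ω => Wv ω = w) (fun ω => Av ω = true ∧ Xv ω = x) := by
    intro x; rw [tower x, key true x]
  -- final bounds per x
  have main : ∀ x : X,
      ((univ.inf' univ_nonempty fun w : W =>
          cpr P (fun ω => Wv ω = w) (fun ω => Av ω = false ∧ Xv ω = x) /
            cpr P (fun ω => Wv ω = w) (fun ω => Av ω = true ∧ Xv ω = x)) *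
        ce P Yv (fun ω => Av ω = true ∧ Xv ω = x) ≤
        ∑ m : M, ce P Yv (fun ω => Av ω = true ∧ Xv ω = x ∧ Mv ω = m) *
          cpr P (fun ω => Mv ω = m) (fun ω => Av ω = false ∧ Xv ω = x)) ∧
      ((∑ m : M, ce P Yv (fun ω => Av ω = true ∧ Xv ω = x ∧ Mv ω = m) *
          cpr P (fun ω => Mv ω = m) (fun ω => Av ω = false ∧ Xv ω = x)) ≤
        (univ.sup' univ_nonempty fun w : W =>
          cpr P (fun ω => Wv ω = w) (fun ω => Av ω = false ∧ Xv ω = x) /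
            cpr P (fun ω => Wv ω = w) (fun ω => Av ω = true ∧ Xv ω = x)) *
        ce P Yv (fun ω => Av ω = true ∧ Xv ω = x)) := by
    intro x
    set q1 : W → ℝ := fun w => cpr P (fun ω => Wv ω = w) (fun ω => Av ω = true ∧ Xv ω = x)
    set q0 : W → ℝ := fun w => cpr P (fun ω => Wv ω = w) (fun ω => Av ω = false ∧ Xv ω = x)
    have hterm : ∀ w : W, h w x * q0 w = (q0 w / q1 w) * (h w x * q1 w) := by
      intro w
      have := (hq1pos x w).ne'
      field_simp
      exact (mul_inv_cancel_right₀ this _).symm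
    have hT : ∀ w : W, 0 ≤ h w x * q1 w := fun w =>
      mul_nonneg (hh w x) (hq1pos x w).le
    rw [hcetrue x, key false x]
    constructor
    · rw [Finset.mul_sum]
      apply Finset.sum_le_sum
      intro w _
      rw [hterm w]
      exact mul_le_mul_of_nonneg_right (Finset.inf'_le (fun w : W => cpr P (fun ω => Wv ω = w) (fun ω => Av ω = false ∧ Xv ω = x) / cpr P (fun ω => Wv ω = w) (fun ω => Av ω = true ∧ Xv ω = x)) (Finset.mem_univ w)) (hT w)
    · rw [Finset.mul_sum]
      apply Finset.sum_le_sum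
      intro w _
      rw [hterm w]
      exact mul_le_mul_of_nonneg_right (Finset.le_sup' (fun w : W => cpr P (fun ω => Wv ω = w) (fun ω => Av ω = false ∧ Xv ω = x) / cpr P (fun ω => Wv ω = w) (fun ω => Av ω = true ∧ Xv ω = x)) (Finset.mem_univ w)) (hT w)
  constructor
  · apply Finset.sum_le_sum
    intro x _
    rw [← Finset.sum_mul]
    exact mul_le_mul_of_nonneg_right (main x).1 (pr_nonneg P hP _)
  · apply Finset.sum_le_sum
    intro x _
    rw [← Finset.sum_mul]
    exact mul_le_mul_of_nonneg_right (main x).2 (pr_nonneg P hP _)
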